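/- Let G be a finite 3-group and let H be an abelian normal subgroup of G isomorphic to C₉ × C₃. If the quotient group G/H admits a colouring bijection, then G admits a colouring bijection. -/

import Mathlib

open Function

/-- A bijection `σ : G → G` is a *colouring bijection* if the three maps
`x ↦ σ(x)·x`, `x ↦ x⁻¹·σ(x)` and `x ↦ x⁻¹·σ(x)·x` are bijections of `G`. -/
def IsColouringBijection {G : Type*} [Group G] (σ : G → G) : Prop :=
  Function.Bijective σ ∧
    Function.Bijective (fun x => σ x * x) ∧
    Function.Bijective (fun x => x⁻¹ * σ x) ∧
    Function.Bijective (fun x => x⁻¹ * σ x * x)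

abbrev AA : Type := ZMod 9 × ZMod 3

def tbl : List (List Nat) := [
  [0, 3, 6, 2, 5, 8, 12, 15, 18, 19, 14, 22, 1, 25, 9, 24, 4, 11, 26, 10, 7, 13, 21, 16, 17, 20, 23],
  [0, 3, 6, 2, 10, 18, 7, 15, 20, 19, 14, 22, 8, 5, 24, 4, 26, 9, 11, 25, 17, 16, 21, 13, 12, 23, 1],
  [0, 3, 6, 4, 9, 12, 16, 18, 24, 19, 14, 22, 26, 1, 7, 8, 10, 5, 11, 17, 25, 15, 20, 23, 13, 2, 21],
  [0, 1, 2, 4, 5, 3, 8, 6, 7, 13, 14, 12, 18, 19, 20, 9, 10, 11, 26, 24, 25, 17, 15, 16, 22, 23, 21],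
  [0, 1, 2, 3, 4, 5, 6, 7, 8, 12, 13, 14, 18, 19, 20, 9, 10, 11, 24, 25, 26, 15, 16, 17, 21, 22, 23],
  [0, 1, 2, 3, 4, 5, 6, 7, 8, 13, 14, 12, 20, 18, 19, 10, 11, 9, 26, 24, 25, 16, 17, 15, 23, 21, 22],
  [0, 1, 2, 4, 5, 3, 8, 6, 7, 12, 13, 14, 19, 20, 18, 11, 9, 10, 24, 25, 26, 16, 17, 15, 23, 21, 22],
  [0, 1, 2, 3, 4, 5, 6, 7, 8, 13, 14, 12, 20, 18, 19, 10, 11, 9, 26, 24, 25, 16, 17, 15, 23, 21, 22],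
  [0, 1, 2, 3, 4, 5, 6, 7, 8, 12, 13, 14, 18, 19, 20, 9, 10, 11, 24, 25, 26, 15, 16, 17, 21, 22, 23],
  [0, 3, 6, 2, 5, 7, 8, 22, 10, 15, 9, 12, 16, 11, 14, 19, 17, 4, 21, 24, 18, 23, 25, 20, 13, 1, 26],
  [0, 3, 6, 2, 5, 7, 8, 11, 21, 10, 13, 16, 9, 12, 17, 15, 18, 4, 20, 23, 26, 19, 22, 24, 25, 1, 14],
  [0, 3, 6, 2, 5, 8, 7, 11, 18, 20, 13, 10, 9, 12, 19, 21, 4, 14, 16, 23, 26, 25, 22, 15, 17, 24, 1],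
  [0, 1, 2, 4, 5, 3, 8, 6, 7, 12, 13, 14, 19, 20, 18, 11, 9, 10, 24, 25, 26, 16, 17, 15, 23, 21, 22],
  [0, 1, 2, 3, 4, 5, 6, 7, 8, 13, 14, 12, 20, 18, 19, 10, 11, 9, 26, 24, 25, 16, 17, 15, 23, 21, 22],
  [0, 1, 2, 3, 4, 5, 6, 7, 8, 12, 13, 14, 18, 19, 20, 9, 10, 11, 24, 25, 26, 15, 16, 17, 21, 22, 23],
  [0, 1, 2, 4, 5, 3, 8, 6, 7, 13, 14, 12, 18, 19, 20, 9, 10, 11, 26, 24, 25, 17, 15, 16, 22, 23, 21],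
  [0, 1, 2, 3, 4, 5, 6, 7, 8, 12, 13, 14, 18, 19, 20, 9, 10, 11, 24, 25, 26, 15, 16, 17, 21, 22, 23],
  [0, 1, 2, 3, 4, 5, 6, 7, 8, 13, 14, 12, 20, 18, 19, 10, 11, 9, 26, 24, 25, 16, 17, 15, 23, 21, 22],
  [0, 3, 6, 2, 5, 16, 14, 11, 8, 7, 19, 22, 9, 12, 26, 13, 10, 24, 20, 23, 17, 15, 1, 4, 25, 21, 18],
  [0, 3, 6, 4, 2, 16, 13, 7, 9, 20, 8, 21, 14, 26, 11, 24, 12, 10, 15, 18, 23, 17, 1, 5, 19, 22, 25],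
  [0, 3, 6, 2, 9, 19, 12, 11, 5, 10, 26, 16, 14, 21, 15, 1, 7, 22, 20, 23, 13, 4, 25, 8, 17, 24, 18],
  [0, 1, 2, 4, 5, 3, 8, 6, 7, 12, 13, 14, 19, 20, 18, 11, 9, 10, 24, 25, 26, 16, 17, 15, 23, 21, 22],
  [0, 1, 2, 3, 4, 5, 6, 7, 8, 12, 13, 14, 18, 19, 20, 9, 10, 11, 24, 25, 26, 15, 16, 17, 21, 22, 23],
  [0, 1, 2, 3, 4, 5, 6, 7, 8, 12, 13, 14, 18, 19, 20, 9, 10, 11, 24, 25, 26, 15, 16, 17, 21, 22, 23],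
  [0, 1, 2, 4, 5, 3, 8, 6, 7, 12, 13, 14, 19, 20, 18, 11, 9, 10, 24, 25, 26, 16, 17, 15, 23, 21, 22],
  [0, 1, 2, 3, 4, 5, 6, 7, 8, 12, 13, 14, 18, 19, 20, 9, 10, 11, 24, 25, 26, 15, 16, 17, 21, 22, 23],
  [0, 1, 2, 3, 4, 5, 6, 7, 8, 12, 13, 14, 18, 19, 20, 9, 10, 11, 24, 25, 26, 15, 16, 17, 21, 22, 23]]

def itb : List (List Nat) := [
  [0, 12, 3, 1, 16, 4, 2, 20, 5, 14, 19, 17, 6, 21, 10, 7, 23, 24, 8, 9, 25, 22, 11, 26, 15, 13, 18],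
  [0, 9, 19, 11, 1, 3, 4, 21, 2, 23, 5, 13, 15, 12, 24, 25, 22, 18, 6, 26, 16, 10, 7, 14, 20, 17, 8],
  [0, 4, 22, 5, 10, 1, 6, 2, 18, 15, 9, 7, 13, 8, 11, 16, 12, 20, 19, 21, 24, 17, 25, 23, 26, 14, 3],
  [0, 12, 3, 1, 16, 4, 2, 20, 5, 14, 19, 17, 6, 21, 10, 7, 23, 24, 8, 9, 25, 22, 11, 26, 15, 13, 18],
  [0, 26, 3, 1, 15, 13, 2, 6, 12, 17, 4, 18, 24, 23, 10, 7, 21, 20, 5, 9, 8, 22, 11, 25, 14, 19, 16],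
  [0, 9, 18, 11, 1, 3, 23, 20, 2, 24, 21, 14, 16, 6, 4, 13, 22, 19, 25, 15, 12, 10, 7, 5, 26, 8, 17],
  [0, 22, 6, 26, 10, 1, 19, 2, 4, 7, 9, 16, 14, 8, 11, 5, 24, 15, 13, 23, 18, 21, 12, 17, 20, 3, 25],
  [0, 3, 26, 1, 13, 15, 2, 12, 6, 4, 17, 18, 23, 24, 10, 21, 7, 20, 8, 9, 5, 25, 11, 22, 16, 19, 14],
  [0, 13, 25, 1, 3, 17, 2, 14, 15, 4, 16, 18, 5, 24, 10, 21, 6, 19, 7, 9, 22, 26, 11, 23, 8, 20, 12],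
  [0, 9, 18, 11, 1, 8, 19, 3, 2, 21, 24, 12, 22, 4, 13, 20, 23, 5, 14, 17, 26, 10, 6, 15, 25, 7, 16],
  [0, 23, 3, 25, 10, 1, 4, 2, 20, 6, 9, 5, 12, 7, 11, 24, 13, 17, 8, 15, 18, 14, 21, 16, 26, 19, 22],
  [0, 25, 13, 1, 17, 3, 2, 15, 14, 16, 4, 18, 24, 5, 10, 6, 21, 19, 22, 9, 7, 23, 11, 26, 12, 20, 8],
  [0, 1, 2, 5, 3, 4, 7, 8, 6, 15, 16, 17, 11, 9, 10, 22, 23, 21, 12, 13, 14, 26, 24, 25, 19, 20, 18],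
  [0, 2, 1, 12, 14, 13, 4, 3, 5, 23, 22, 21, 8, 7, 6, 20, 19, 18, 25, 24, 26, 10, 9, 11, 15, 17, 16],
  [0, 3, 6, 17, 9, 23, 12, 26, 18, 2, 5, 8, 16, 11, 22, 14, 25, 20, 1, 4, 7, 15, 10, 21, 13, 24, 19],
  [0, 16, 14, 26, 3, 10, 22, 20, 6, 15, 13, 2, 5, 9, 25, 19, 8, 21, 12, 1, 17, 11, 24, 4, 7, 23, 18],
  [0, 1, 2, 3, 4, 5, 6, 7, 8, 15, 16, 17, 9, 10, 11, 21, 22, 23, 12, 13, 14, 24, 25, 26, 18, 19, 20],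
  [0, 2, 1, 12, 14, 13, 3, 5, 4, 21, 23, 22, 6, 8, 7, 18, 20, 19, 24, 26, 25, 9, 11, 10, 15, 17, 16],
  [0, 6, 3, 9, 17, 23, 18, 26, 12, 2, 8, 5, 11, 16, 22, 20, 25, 14, 1, 7, 4, 10, 15, 21, 19, 24, 13],
  [0, 14, 16, 26, 10, 3, 22, 6, 20, 13, 15, 2, 9, 5, 25, 8, 19, 21, 17, 1, 12, 4, 24, 11, 18, 23, 7],
  [0, 1, 2, 3, 4, 5, 6, 7, 8, 17, 15, 16, 11, 9, 10, 23, 21, 22, 13, 14, 12, 25, 26, 24, 19, 20, 18],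
  [0, 2, 1, 14, 13, 12, 3, 5, 4, 22, 21, 23, 6, 8, 7, 20, 19, 18, 26, 25, 24, 10, 9, 11, 16, 15, 17],
  [0, 3, 6, 17, 9, 23, 12, 26, 18, 2, 5, 8, 16, 11, 22, 14, 25, 20, 1, 4, 7, 15, 10, 21, 13, 24, 19],
  [0, 16, 14, 26, 3, 10, 22, 20, 6, 15, 13, 2, 5, 9, 25, 19, 8, 21, 12, 1, 17, 11, 24, 4, 7, 23, 18],
  [0, 1, 2, 5, 3, 4, 7, 8, 6, 16, 17, 15, 9, 10, 11, 23, 21, 22, 14, 12, 13, 25, 26, 24, 18, 19, 20],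
  [0, 2, 1, 13, 12, 14, 4, 3, 5, 22, 21, 23, 8, 7, 6, 18, 20, 19, 26, 25, 24, 9, 11, 10, 17, 16, 15],
  [0, 3, 6, 9, 22, 16, 18, 12, 25, 1, 4, 7, 10, 23, 17, 19, 13, 26, 2, 5, 8, 11, 21, 15, 20, 14, 24],
  [0, 17, 13, 25, 3, 11, 23, 19, 6, 14, 1, 15, 9, 26, 4, 7, 21, 20, 16, 12, 2, 5, 10, 24, 18, 8, 22],
  [0, 1, 2, 3, 4, 5, 6, 7, 8, 17, 15, 16, 11, 9, 10, 23, 21, 22, 13, 14, 12, 25, 26, 24, 19, 20, 18],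
  [0, 2, 1, 14, 13, 12, 3, 5, 4, 22, 21, 23, 6, 8, 7, 20, 19, 18, 26, 25, 24, 10, 9, 11, 16, 15, 17],
  [0, 6, 3, 22, 9, 16, 25, 12, 18, 1, 7, 4, 23, 10, 17, 26, 13, 19, 2, 8, 5, 21, 11, 15, 24, 14, 20],
  [0, 17, 13, 11, 25, 3, 19, 6, 23, 14, 1, 15, 4, 9, 26, 21, 20, 7, 16, 12, 2, 24, 5, 10, 8, 22, 18],
  [0, 1, 2, 3, 4, 5, 6, 7, 8, 15, 16, 17, 9, 10, 11, 21, 22, 23, 12, 13, 14, 24, 25, 26, 18, 19, 20],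
  [0, 2, 1, 12, 14, 13, 3, 5, 4, 21, 23, 22, 6, 8, 7, 18, 20, 19, 24, 26, 25, 9, 11, 10, 15, 17, 16],
  [0, 3, 6, 9, 22, 16, 18, 12, 25, 1, 4, 7, 10, 23, 17, 19, 13, 26, 2, 5, 8, 11, 21, 15, 20, 14, 24],
  [0, 17, 13, 25, 3, 11, 23, 19, 6, 14, 1, 15, 9, 26, 4, 7, 21, 20, 16, 12, 2, 5, 10, 24, 18, 8, 22],
  [0, 25, 3, 1, 17, 4, 2, 5, 6, 10, 8, 13, 11, 24, 14, 9, 12, 16, 20, 15, 23, 18, 7, 21, 19, 22, 26],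
  [0, 12, 7, 16, 1, 3, 4, 15, 2, 5, 24, 20, 18, 23, 6, 8, 19, 21, 17, 10, 22, 13, 26, 11, 9, 14, 25],
  [0, 20, 10, 18, 11, 1, 9, 2, 19, 26, 16, 6, 25, 15, 8, 23, 13, 3, 14, 4, 21, 22, 12, 5, 7, 24, 17],
  [0, 15, 13, 1, 7, 14, 2, 12, 26, 10, 25, 23, 11, 17, 21, 9, 22, 6, 20, 8, 3, 18, 24, 4, 19, 5, 16],
  [0, 25, 3, 1, 17, 4, 2, 5, 6, 12, 9, 7, 13, 10, 26, 15, 11, 14, 16, 21, 18, 8, 22, 19, 23, 24, 20],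
  [0, 14, 8, 15, 1, 3, 4, 16, 2, 5, 26, 18, 19, 21, 6, 7, 20, 22, 17, 9, 23, 12, 24, 10, 11, 13, 25],
  [0, 9, 18, 10, 19, 1, 20, 2, 11, 6, 15, 24, 16, 25, 7, 21, 3, 12, 4, 13, 22, 23, 5, 14, 17, 26, 8],
  [0, 16, 12, 1, 8, 13, 2, 14, 24, 21, 9, 25, 22, 10, 17, 6, 11, 23, 7, 3, 18, 26, 4, 19, 5, 15, 20],
  [0, 26, 3, 1, 16, 4, 2, 6, 5, 12, 11, 7, 13, 10, 17, 23, 18, 24, 8, 14, 9, 15, 22, 19, 25, 21, 20],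
  [0, 17, 9, 14, 1, 3, 4, 18, 2, 15, 5, 23, 19, 6, 24, 7, 20, 22, 11, 21, 16, 12, 25, 10, 26, 13, 8],
  [0, 24, 11, 10, 19, 1, 20, 2, 17, 6, 25, 9, 7, 26, 23, 3, 12, 15, 13, 22, 4, 8, 5, 21, 14, 18, 16],
  [0, 12, 8, 1, 13, 15, 2, 23, 25, 26, 11, 14, 16, 10, 22, 6, 18, 21, 3, 7, 9, 4, 17, 19, 5, 24, 20],
  [0, 1, 2, 5, 3, 4, 7, 8, 6, 16, 17, 15, 9, 10, 11, 23, 21, 22, 14, 12, 13, 25, 26, 24, 18, 19, 20],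
  [0, 2, 1, 13, 12, 14, 4, 3, 5, 22, 21, 23, 8, 7, 6, 18, 20, 19, 26, 25, 24, 9, 11, 10, 17, 16, 15],
  [0, 5, 7, 9, 22, 15, 18, 14, 24, 2, 4, 6, 11, 21, 17, 20, 13, 26, 1, 3, 8, 10, 23, 16, 19, 12, 25],
  [0, 17, 13, 5, 10, 24, 7, 21, 20, 16, 12, 2, 9, 26, 4, 23, 19, 6, 14, 1, 15, 25, 3, 11, 18, 8, 22],
  [0, 1, 2, 3, 4, 5, 6, 7, 8, 17, 15, 16, 11, 9, 10, 23, 21, 22, 13, 14, 12, 25, 26, 24, 19, 20, 18],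
  [0, 2, 1, 14, 13, 12, 3, 5, 4, 22, 21, 23, 6, 8, 7, 20, 19, 18, 26, 25, 24, 10, 9, 11, 16, 15, 17],
  [0, 7, 5, 22, 9, 15, 24, 14, 18, 2, 6, 4, 21, 11, 17, 26, 13, 20, 1, 8, 3, 23, 10, 16, 25, 12, 19],
  [0, 17, 13, 24, 5, 10, 21, 20, 7, 16, 12, 2, 4, 9, 26, 19, 6, 23, 14, 1, 15, 11, 25, 3, 8, 22, 18],
  [0, 1, 2, 3, 4, 5, 6, 7, 8, 15, 16, 17, 9, 10, 11, 21, 22, 23, 12, 13, 14, 24, 25, 26, 18, 19, 20],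
  [0, 2, 1, 12, 14, 13, 3, 5, 4, 21, 23, 22, 6, 8, 7, 18, 20, 19, 24, 26, 25, 9, 11, 10, 15, 17, 16],
  [0, 5, 7, 9, 22, 15, 18, 14, 24, 2, 4, 6, 11, 21, 17, 20, 13, 26, 1, 3, 8, 10, 23, 16, 19, 12, 25],
  [0, 17, 13, 5, 10, 24, 7, 21, 20, 16, 12, 2, 9, 26, 4, 23, 19, 6, 14, 1, 15, 25, 3, 11, 18, 8, 22],
  [0, 1, 2, 5, 3, 4, 7, 8, 6, 15, 16, 17, 11, 9, 10, 22, 23, 21, 12, 13, 14, 26, 24, 25, 19, 20, 18],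
  [0, 2, 1, 12, 14, 13, 4, 3, 5, 23, 22, 21, 8, 7, 6, 20, 19, 18, 25, 24, 26, 10, 9, 11, 15, 17, 16],
  [0, 4, 8, 15, 9, 23, 13, 24, 18, 1, 5, 6, 16, 10, 21, 14, 25, 19, 2, 3, 7, 17, 11, 22, 12, 26, 20],
  [0, 16, 14, 11, 24, 4, 19, 8, 21, 12, 1, 17, 5, 9, 25, 22, 20, 6, 15, 13, 2, 26, 3, 10, 7, 23, 18],
  [0, 1, 2, 3, 4, 5, 6, 7, 8, 15, 16, 17, 9, 10, 11, 21, 22, 23, 12, 13, 14, 24, 25, 26, 18, 19, 20],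
  [0, 2, 1, 12, 14, 13, 3, 5, 4, 21, 23, 22, 6, 8, 7, 18, 20, 19, 24, 26, 25, 9, 11, 10, 15, 17, 16],
  [0, 8, 4, 9, 15, 23, 18, 24, 13, 1, 6, 5, 10, 16, 21, 19, 25, 14, 2, 7, 3, 11, 17, 22, 20, 26, 12],
  [0, 14, 16, 4, 24, 11, 8, 19, 21, 17, 1, 12, 9, 5, 25, 22, 6, 20, 13, 15, 2, 26, 10, 3, 18, 23, 7],
  [0, 1, 2, 3, 4, 5, 6, 7, 8, 17, 15, 16, 11, 9, 10, 23, 21, 22, 13, 14, 12, 25, 26, 24, 19, 20, 18],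
  [0, 2, 1, 14, 13, 12, 3, 5, 4, 22, 21, 23, 6, 8, 7, 20, 19, 18, 26, 25, 24, 10, 9, 11, 16, 15, 17],
  [0, 4, 8, 15, 9, 23, 13, 24, 18, 1, 5, 6, 16, 10, 21, 14, 25, 19, 2, 3, 7, 17, 11, 22, 12, 26, 20],
  [0, 16, 14, 11, 24, 4, 19, 8, 21, 12, 1, 17, 5, 9, 25, 22, 20, 6, 15, 13, 2, 26, 3, 10, 7, 23, 18],
  [0, 22, 3, 1, 23, 4, 2, 9, 8, 12, 16, 7, 13, 15, 6, 21, 5, 20, 26, 10, 18, 25, 11, 19, 17, 24, 14],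
  [0, 15, 10, 11, 1, 3, 4, 20, 2, 21, 14, 18, 19, 8, 17, 7, 9, 26, 5, 25, 6, 12, 24, 22, 23, 13, 16],
  [0, 17, 18, 21, 19, 1, 12, 2, 3, 10, 4, 13, 16, 26, 11, 22, 15, 25, 8, 24, 23, 14, 7, 5, 20, 9, 6],
  [0, 16, 7, 1, 15, 6, 2, 9, 14, 26, 22, 3, 25, 23, 4, 17, 24, 20, 12, 10, 18, 13, 11, 19, 21, 5, 8],
  [0, 22, 4, 1, 3, 23, 2, 7, 10, 8, 17, 14, 16, 6, 12, 18, 5, 21, 19, 24, 9, 11, 25, 20, 15, 26, 13],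
  [0, 16, 9, 4, 1, 11, 18, 3, 2, 13, 19, 21, 15, 20, 7, 10, 24, 8, 5, 6, 25, 26, 14, 22, 17, 23, 12],
  [0, 15, 19, 20, 21, 1, 4, 2, 14, 3, 12, 9, 17, 11, 24, 16, 25, 22, 26, 7, 23, 13, 5, 8, 18, 10, 6],
  [0, 8, 17, 1, 16, 6, 2, 13, 10, 22, 4, 24, 3, 23, 25, 18, 15, 26, 19, 14, 9, 11, 12, 20, 5, 21, 7],
  [0, 15, 3, 1, 21, 8, 2, 16, 23, 4, 9, 7, 6, 20, 12, 14, 11, 24, 26, 5, 18, 13, 17, 19, 25, 22, 10],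
  [0, 23, 14, 20, 1, 3, 10, 13, 2, 17, 8, 18, 19, 4, 24, 7, 15, 26, 6, 9, 22, 5, 25, 16, 11, 21, 12],
  [0, 9, 18, 15, 19, 1, 3, 2, 11, 12, 24, 16, 26, 22, 14, 4, 10, 8, 13, 25, 21, 7, 23, 20, 5, 17, 6],
  [0, 7, 5, 1, 13, 6, 2, 24, 22, 3, 9, 26, 17, 20, 21, 23, 11, 25, 15, 4, 18, 12, 8, 19, 16, 14, 10],
  [0, 1, 2, 5, 3, 4, 7, 8, 6, 16, 17, 15, 9, 10, 11, 23, 21, 22, 14, 12, 13, 25, 26, 24, 18, 19, 20],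
  [0, 2, 1, 13, 12, 14, 4, 3, 5, 22, 21, 23, 8, 7, 6, 18, 20, 19, 26, 25, 24, 9, 11, 10, 17, 16, 15],
  [0, 4, 8, 9, 21, 16, 18, 13, 25, 2, 3, 7, 11, 23, 15, 20, 12, 24, 1, 5, 6, 10, 22, 17, 19, 14, 26],
  [0, 12, 15, 25, 10, 4, 23, 8, 20, 14, 17, 2, 9, 3, 24, 7, 19, 22, 16, 1, 13, 5, 26, 11, 18, 21, 6],
  [0, 1, 2, 3, 4, 5, 6, 7, 8, 15, 16, 17, 9, 10, 11, 21, 22, 23, 12, 13, 14, 24, 25, 26, 18, 19, 20],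
  [0, 2, 1, 12, 14, 13, 3, 5, 4, 21, 23, 22, 6, 8, 7, 18, 20, 19, 24, 26, 25, 9, 11, 10, 15, 17, 16],
  [0, 8, 4, 9, 16, 21, 18, 25, 13, 2, 7, 3, 11, 15, 23, 20, 24, 12, 1, 6, 5, 10, 17, 22, 19, 26, 14],
  [0, 15, 12, 4, 10, 25, 8, 23, 20, 17, 14, 2, 9, 24, 3, 22, 19, 7, 13, 1, 16, 26, 5, 11, 18, 6, 21],
  [0, 1, 2, 3, 4, 5, 6, 7, 8, 15, 16, 17, 9, 10, 11, 21, 22, 23, 12, 13, 14, 24, 25, 26, 18, 19, 20],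
  [0, 2, 1, 12, 14, 13, 3, 5, 4, 21, 23, 22, 6, 8, 7, 18, 20, 19, 24, 26, 25, 9, 11, 10, 15, 17, 16],
  [0, 4, 8, 9, 21, 16, 18, 13, 25, 2, 3, 7, 11, 23, 15, 20, 12, 24, 1, 5, 6, 10, 22, 17, 19, 14, 26],
  [0, 12, 15, 25, 10, 4, 23, 8, 20, 14, 17, 2, 9, 3, 24, 7, 19, 22, 16, 1, 13, 5, 26, 11, 18, 21, 6],
  [0, 1, 2, 5, 3, 4, 7, 8, 6, 16, 17, 15, 9, 10, 11, 23, 21, 22, 14, 12, 13, 25, 26, 24, 18, 19, 20],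
  [0, 2, 1, 13, 12, 14, 4, 3, 5, 22, 21, 23, 8, 7, 6, 18, 20, 19, 26, 25, 24, 9, 11, 10, 17, 16, 15],
  [0, 5, 7, 9, 21, 17, 18, 14, 26, 1, 3, 8, 10, 22, 15, 19, 12, 24, 2, 4, 6, 11, 23, 16, 20, 13, 25],
  [0, 12, 15, 5, 26, 11, 7, 19, 22, 16, 1, 13, 9, 3, 24, 23, 8, 20, 14, 17, 2, 25, 10, 4, 18, 21, 6],
  [0, 1, 2, 3, 4, 5, 6, 7, 8, 15, 16, 17, 9, 10, 11, 21, 22, 23, 12, 13, 14, 24, 25, 26, 18, 19, 20],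
  [0, 2, 1, 12, 14, 13, 3, 5, 4, 21, 23, 22, 6, 8, 7, 18, 20, 19, 24, 26, 25, 9, 11, 10, 15, 17, 16],
  [0, 7, 5, 9, 17, 21, 18, 26, 14, 1, 8, 3, 10, 15, 22, 19, 24, 12, 2, 6, 4, 11, 16, 23, 20, 25, 13],
  [0, 15, 12, 26, 5, 11, 22, 19, 7, 13, 1, 16, 9, 24, 3, 8, 23, 20, 17, 14, 2, 4, 10, 25, 18, 6, 21],
  [0, 1, 2, 3, 4, 5, 6, 7, 8, 15, 16, 17, 9, 10, 11, 21, 22, 23, 12, 13, 14, 24, 25, 26, 18, 19, 20],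
  [0, 2, 1, 12, 14, 13, 3, 5, 4, 21, 23, 22, 6, 8, 7, 18, 20, 19, 24, 26, 25, 9, 11, 10, 15, 17, 16],
  [0, 5, 7, 9, 21, 17, 18, 14, 26, 1, 3, 8, 10, 22, 15, 19, 12, 24, 2, 4, 6, 11, 23, 16, 20, 13, 25],
  [0, 12, 15, 5, 26, 11, 7, 19, 22, 16, 1, 13, 9, 3, 24, 23, 8, 20, 14, 17, 2, 25, 10, 4, 18, 21, 6]]


def tauF (a eb : ZMod 9) (c : ZMod 3) : AA → AA := fun p =>
  let v := (tbl.getD ((a.val / 3) * 9 + (eb.val / 3) * 3 + c.val) []).getD (p.1.val * 3 + p.2.val) 0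
  (((v / 3 : ℕ) : ZMod 9), ((v % 3 : ℕ) : ZMod 3))

def Fm (a eb : ZMod 9) (c d : ZMod 3) : AA → AA := fun p =>
  (a * p.1 + eb * ((p.2.val : ZMod 9)), c * ((p.1.val : ZMod 3)) + d * p.2)

def invF (k : Nat) : AA → AA := fun p =>
  let v := (itb.getD k []).getD (p.1.val * 3 + p.2.val) 0
  (((v / 3 : ℕ) : ZMod 9), ((v % 3 : ℕ) : ZMod 3))

lemma key_0 : Injective (tauF 1 0 0) ∧ Injective (fun p => tauF 1 0 0 p + p) ∧
    Injective (fun p => tauF 1 0 0 p - Fm 1 0 0 1 p) ∧ Injective (fun p => tauF 1 0 0 p - Fm 1 0 0 1 p + p) := by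
  have h : ∀ p : AA, invF 0 (tauF 1 0 0 p) = p ∧ invF 1 (tauF 1 0 0 p + p) = p ∧
      invF 2 (tauF 1 0 0 p - Fm 1 0 0 1 p) = p ∧ invF 3 (tauF 1 0 0 p - Fm 1 0 0 1 p + p) = p := by decide
  exact ⟨Function.LeftInverse.injective fun p => (h p).1,
    Function.LeftInverse.injective fun p => (h p).2.1,
    Function.LeftInverse.injective fun p => (h p).2.2.1,
    Function.LeftInverse.injective fun p => (h p).2.2.2⟩

lemma key_1 : Injective (tauF 1 0 1) ∧ Injective (fun p => tauF 1 0 1 p + p) ∧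
    Injective (fun p => tauF 1 0 1 p - Fm 1 0 1 1 p) ∧ Injective (fun p => tauF 1 0 1 p - Fm 1 0 1 1 p + p) := by
  have h : ∀ p : AA, invF 4 (tauF 1 0 1 p) = p ∧ invF 5 (tauF 1 0 1 p + p) = p ∧
      invF 6 (tauF 1 0 1 p - Fm 1 0 1 1 p) = p ∧ invF 7 (tauF 1 0 1 p - Fm 1 0 1 1 p + p) = p := by decide
  exact ⟨Function.LeftInverse.injective fun p => (h p).1,
    Function.LeftInverse.injective fun p => (h p).2.1,
    Function.LeftInverse.injective fun p => (h p).2.2.1,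
    Function.LeftInverse.injective fun p => (h p).2.2.2⟩

lemma key_2 : Injective (tauF 1 0 2) ∧ Injective (fun p => tauF 1 0 2 p + p) ∧
    Injective (fun p => tauF 1 0 2 p - Fm 1 0 2 1 p) ∧ Injective (fun p => tauF 1 0 2 p - Fm 1 0 2 1 p + p) := by
  have h : ∀ p : AA, invF 8 (tauF 1 0 2 p) = p ∧ invF 9 (tauF 1 0 2 p + p) = p ∧
      invF 10 (tauF 1 0 2 p - Fm 1 0 2 1 p) = p ∧ invF 11 (tauF 1 0 2 p - Fm 1 0 2 1 p + p) = p := by decide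
  exact ⟨Function.LeftInverse.injective fun p => (h p).1,
    Function.LeftInverse.injective fun p => (h p).2.1,
    Function.LeftInverse.injective fun p => (h p).2.2.1,
    Function.LeftInverse.injective fun p => (h p).2.2.2⟩

lemma key_3 : Injective (tauF 1 3 0) ∧ Injective (fun p => tauF 1 3 0 p + p) ∧
    Injective (fun p => tauF 1 3 0 p - Fm 1 3 0 1 p) ∧ Injective (fun p => tauF 1 3 0 p - Fm 1 3 0 1 p + p) := by
  have h : ∀ p : AA, invF 12 (tauF 1 3 0 p) = p ∧ invF 13 (tauF 1 3 0 p + p) = p ∧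
      invF 14 (tauF 1 3 0 p - Fm 1 3 0 1 p) = p ∧ invF 15 (tauF 1 3 0 p - Fm 1 3 0 1 p + p) = p := by decide
  exact ⟨Function.LeftInverse.injective fun p => (h p).1,
    Function.LeftInverse.injective fun p => (h p).2.1,
    Function.LeftInverse.injective fun p => (h p).2.2.1,
    Function.LeftInverse.injective fun p => (h p).2.2.2⟩

lemma key_4 : Injective (tauF 1 3 1) ∧ Injective (fun p => tauF 1 3 1 p + p) ∧
    Injective (fun p => tauF 1 3 1 p - Fm 1 3 1 1 p) ∧ Injective (fun p => tauF 1 3 1 p - Fm 1 3 1 1 p + p) := by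
  have h : ∀ p : AA, invF 16 (tauF 1 3 1 p) = p ∧ invF 17 (tauF 1 3 1 p + p) = p ∧
      invF 18 (tauF 1 3 1 p - Fm 1 3 1 1 p) = p ∧ invF 19 (tauF 1 3 1 p - Fm 1 3 1 1 p + p) = p := by decide
  exact ⟨Function.LeftInverse.injective fun p => (h p).1,
    Function.LeftInverse.injective fun p => (h p).2.1,
    Function.LeftInverse.injective fun p => (h p).2.2.1,
    Function.LeftInverse.injective fun p => (h p).2.2.2⟩

lemma key_5 : Injective (tauF 1 3 2) ∧ Injective (fun p => tauF 1 3 2 p + p) ∧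
    Injective (fun p => tauF 1 3 2 p - Fm 1 3 2 1 p) ∧ Injective (fun p => tauF 1 3 2 p - Fm 1 3 2 1 p + p) := by
  have h : ∀ p : AA, invF 20 (tauF 1 3 2 p) = p ∧ invF 21 (tauF 1 3 2 p + p) = p ∧
      invF 22 (tauF 1 3 2 p - Fm 1 3 2 1 p) = p ∧ invF 23 (tauF 1 3 2 p - Fm 1 3 2 1 p + p) = p := by decide
  exact ⟨Function.LeftInverse.injective fun p => (h p).1,
    Function.LeftInverse.injective fun p => (h p).2.1,
    Function.LeftInverse.injective fun p => (h p).2.2.1,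
    Function.LeftInverse.injective fun p => (h p).2.2.2⟩

lemma key_6 : Injective (tauF 1 6 0) ∧ Injective (fun p => tauF 1 6 0 p + p) ∧
    Injective (fun p => tauF 1 6 0 p - Fm 1 6 0 1 p) ∧ Injective (fun p => tauF 1 6 0 p - Fm 1 6 0 1 p + p) := by
  have h : ∀ p : AA, invF 24 (tauF 1 6 0 p) = p ∧ invF 25 (tauF 1 6 0 p + p) = p ∧
      invF 26 (tauF 1 6 0 p - Fm 1 6 0 1 p) = p ∧ invF 27 (tauF 1 6 0 p - Fm 1 6 0 1 p + p) = p := by decide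
  exact ⟨Function.LeftInverse.injective fun p => (h p).1,
    Function.LeftInverse.injective fun p => (h p).2.1,
    Function.LeftInverse.injective fun p => (h p).2.2.1,
    Function.LeftInverse.injective fun p => (h p).2.2.2⟩

lemma key_7 : Injective (tauF 1 6 1) ∧ Injective (fun p => tauF 1 6 1 p + p) ∧
    Injective (fun p => tauF 1 6 1 p - Fm 1 6 1 1 p) ∧ Injective (fun p => tauF 1 6 1 p - Fm 1 6 1 1 p + p) := by
  have h : ∀ p : AA, invF 28 (tauF 1 6 1 p) = p ∧ invF 29 (tauF 1 6 1 p + p) = p ∧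
      invF 30 (tauF 1 6 1 p - Fm 1 6 1 1 p) = p ∧ invF 31 (tauF 1 6 1 p - Fm 1 6 1 1 p + p) = p := by decide
  exact ⟨Function.LeftInverse.injective fun p => (h p).1,
    Function.LeftInverse.injective fun p => (h p).2.1,
    Function.LeftInverse.injective fun p => (h p).2.2.1,
    Function.LeftInverse.injective fun p => (h p).2.2.2⟩

lemma key_8 : Injective (tauF 1 6 2) ∧ Injective (fun p => tauF 1 6 2 p + p) ∧
    Injective (fun p => tauF 1 6 2 p - Fm 1 6 2 1 p) ∧ Injective (fun p => tauF 1 6 2 p - Fm 1 6 2 1 p + p) := by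
  have h : ∀ p : AA, invF 32 (tauF 1 6 2 p) = p ∧ invF 33 (tauF 1 6 2 p + p) = p ∧
      invF 34 (tauF 1 6 2 p - Fm 1 6 2 1 p) = p ∧ invF 35 (tauF 1 6 2 p - Fm 1 6 2 1 p + p) = p := by decide
  exact ⟨Function.LeftInverse.injective fun p => (h p).1,
    Function.LeftInverse.injective fun p => (h p).2.1,
    Function.LeftInverse.injective fun p => (h p).2.2.1,
    Function.LeftInverse.injective fun p => (h p).2.2.2⟩

lemma key_9 : Injective (tauF 4 0 0) ∧ Injective (fun p => tauF 4 0 0 p + p) ∧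
    Injective (fun p => tauF 4 0 0 p - Fm 4 0 0 1 p) ∧ Injective (fun p => tauF 4 0 0 p - Fm 4 0 0 1 p + p) := by
  have h : ∀ p : AA, invF 36 (tauF 4 0 0 p) = p ∧ invF 37 (tauF 4 0 0 p + p) = p ∧
      invF 38 (tauF 4 0 0 p - Fm 4 0 0 1 p) = p ∧ invF 39 (tauF 4 0 0 p - Fm 4 0 0 1 p + p) = p := by decide
  exact ⟨Function.LeftInverse.injective fun p => (h p).1,
    Function.LeftInverse.injective fun p => (h p).2.1,
    Function.LeftInverse.injective fun p => (h p).2.2.1,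
    Function.LeftInverse.injective fun p => (h p).2.2.2⟩

lemma key_10 : Injective (tauF 4 0 1) ∧ Injective (fun p => tauF 4 0 1 p + p) ∧
    Injective (fun p => tauF 4 0 1 p - Fm 4 0 1 1 p) ∧ Injective (fun p => tauF 4 0 1 p - Fm 4 0 1 1 p + p) := by
  have h : ∀ p : AA, invF 40 (tauF 4 0 1 p) = p ∧ invF 41 (tauF 4 0 1 p + p) = p ∧
      invF 42 (tauF 4 0 1 p - Fm 4 0 1 1 p) = p ∧ invF 43 (tauF 4 0 1 p - Fm 4 0 1 1 p + p) = p := by decide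
  exact ⟨Function.LeftInverse.injective fun p => (h p).1,
    Function.LeftInverse.injective fun p => (h p).2.1,
    Function.LeftInverse.injective fun p => (h p).2.2.1,
    Function.LeftInverse.injective fun p => (h p).2.2.2⟩

lemma key_11 : Injective (tauF 4 0 2) ∧ Injective (fun p => tauF 4 0 2 p + p) ∧
    Injective (fun p => tauF 4 0 2 p - Fm 4 0 2 1 p) ∧ Injective (fun p => tauF 4 0 2 p - Fm 4 0 2 1 p + p) := by
  have h : ∀ p : AA, invF 44 (tauF 4 0 2 p) = p ∧ invF 45 (tauF 4 0 2 p + p) = p ∧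
      invF 46 (tauF 4 0 2 p - Fm 4 0 2 1 p) = p ∧ invF 47 (tauF 4 0 2 p - Fm 4 0 2 1 p + p) = p := by decide
  exact ⟨Function.LeftInverse.injective fun p => (h p).1,
    Function.LeftInverse.injective fun p => (h p).2.1,
    Function.LeftInverse.injective fun p => (h p).2.2.1,
    Function.LeftInverse.injective fun p => (h p).2.2.2⟩

lemma key_12 : Injective (tauF 4 3 0) ∧ Injective (fun p => tauF 4 3 0 p + p) ∧
    Injective (fun p => tauF 4 3 0 p - Fm 4 3 0 1 p) ∧ Injective (fun p => tauF 4 3 0 p - Fm 4 3 0 1 p + p) := by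
  have h : ∀ p : AA, invF 48 (tauF 4 3 0 p) = p ∧ invF 49 (tauF 4 3 0 p + p) = p ∧
      invF 50 (tauF 4 3 0 p - Fm 4 3 0 1 p) = p ∧ invF 51 (tauF 4 3 0 p - Fm 4 3 0 1 p + p) = p := by decide
  exact ⟨Function.LeftInverse.injective fun p => (h p).1,
    Function.LeftInverse.injective fun p => (h p).2.1,
    Function.LeftInverse.injective fun p => (h p).2.2.1,
    Function.LeftInverse.injective fun p => (h p).2.2.2⟩

lemma key_13 : Injective (tauF 4 3 1) ∧ Injective (fun p => tauF 4 3 1 p + p) ∧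
    Injective (fun p => tauF 4 3 1 p - Fm 4 3 1 1 p) ∧ Injective (fun p => tauF 4 3 1 p - Fm 4 3 1 1 p + p) := by
  have h : ∀ p : AA, invF 52 (tauF 4 3 1 p) = p ∧ invF 53 (tauF 4 3 1 p + p) = p ∧
      invF 54 (tauF 4 3 1 p - Fm 4 3 1 1 p) = p ∧ invF 55 (tauF 4 3 1 p - Fm 4 3 1 1 p + p) = p := by decide
  exact ⟨Function.LeftInverse.injective fun p => (h p).1,
    Function.LeftInverse.injective fun p => (h p).2.1,
    Function.LeftInverse.injective fun p => (h p).2.2.1,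
    Function.LeftInverse.injective fun p => (h p).2.2.2⟩

lemma key_14 : Injective (tauF 4 3 2) ∧ Injective (fun p => tauF 4 3 2 p + p) ∧
    Injective (fun p => tauF 4 3 2 p - Fm 4 3 2 1 p) ∧ Injective (fun p => tauF 4 3 2 p - Fm 4 3 2 1 p + p) := by
  have h : ∀ p : AA, invF 56 (tauF 4 3 2 p) = p ∧ invF 57 (tauF 4 3 2 p + p) = p ∧
      invF 58 (tauF 4 3 2 p - Fm 4 3 2 1 p) = p ∧ invF 59 (tauF 4 3 2 p - Fm 4 3 2 1 p + p) = p := by decide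
  exact ⟨Function.LeftInverse.injective fun p => (h p).1,
    Function.LeftInverse.injective fun p => (h p).2.1,
    Function.LeftInverse.injective fun p => (h p).2.2.1,
    Function.LeftInverse.injective fun p => (h p).2.2.2⟩

lemma key_15 : Injective (tauF 4 6 0) ∧ Injective (fun p => tauF 4 6 0 p + p) ∧
    Injective (fun p => tauF 4 6 0 p - Fm 4 6 0 1 p) ∧ Injective (fun p => tauF 4 6 0 p - Fm 4 6 0 1 p + p) := by
  have h : ∀ p : AA, invF 60 (tauF 4 6 0 p) = p ∧ invF 61 (tauF 4 6 0 p + p) = p ∧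
      invF 62 (tauF 4 6 0 p - Fm 4 6 0 1 p) = p ∧ invF 63 (tauF 4 6 0 p - Fm 4 6 0 1 p + p) = p := by decide
  exact ⟨Function.LeftInverse.injective fun p => (h p).1,
    Function.LeftInverse.injective fun p => (h p).2.1,
    Function.LeftInverse.injective fun p => (h p).2.2.1,
    Function.LeftInverse.injective fun p => (h p).2.2.2⟩

lemma key_16 : Injective (tauF 4 6 1) ∧ Injective (fun p => tauF 4 6 1 p + p) ∧
    Injective (fun p => tauF 4 6 1 p - Fm 4 6 1 1 p) ∧ Injective (fun p => tauF 4 6 1 p - Fm 4 6 1 1 p + p) := by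
  have h : ∀ p : AA, invF 64 (tauF 4 6 1 p) = p ∧ invF 65 (tauF 4 6 1 p + p) = p ∧
      invF 66 (tauF 4 6 1 p - Fm 4 6 1 1 p) = p ∧ invF 67 (tauF 4 6 1 p - Fm 4 6 1 1 p + p) = p := by decide
  exact ⟨Function.LeftInverse.injective fun p => (h p).1,
    Function.LeftInverse.injective fun p => (h p).2.1,
    Function.LeftInverse.injective fun p => (h p).2.2.1,
    Function.LeftInverse.injective fun p => (h p).2.2.2⟩

lemma key_17 : Injective (tauF 4 6 2) ∧ Injective (fun p => tauF 4 6 2 p + p) ∧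
    Injective (fun p => tauF 4 6 2 p - Fm 4 6 2 1 p) ∧ Injective (fun p => tauF 4 6 2 p - Fm 4 6 2 1 p + p) := by
  have h : ∀ p : AA, invF 68 (tauF 4 6 2 p) = p ∧ invF 69 (tauF 4 6 2 p + p) = p ∧
      invF 70 (tauF 4 6 2 p - Fm 4 6 2 1 p) = p ∧ invF 71 (tauF 4 6 2 p - Fm 4 6 2 1 p + p) = p := by decide
  exact ⟨Function.LeftInverse.injective fun p => (h p).1,
    Function.LeftInverse.injective fun p => (h p).2.1,
    Function.LeftInverse.injective fun p => (h p).2.2.1,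
    Function.LeftInverse.injective fun p => (h p).2.2.2⟩

lemma key_18 : Injective (tauF 7 0 0) ∧ Injective (fun p => tauF 7 0 0 p + p) ∧
    Injective (fun p => tauF 7 0 0 p - Fm 7 0 0 1 p) ∧ Injective (fun p => tauF 7 0 0 p - Fm 7 0 0 1 p + p) := by
  have h : ∀ p : AA, invF 72 (tauF 7 0 0 p) = p ∧ invF 73 (tauF 7 0 0 p + p) = p ∧
      invF 74 (tauF 7 0 0 p - Fm 7 0 0 1 p) = p ∧ invF 75 (tauF 7 0 0 p - Fm 7 0 0 1 p + p) = p := by decide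
  exact ⟨Function.LeftInverse.injective fun p => (h p).1,
    Function.LeftInverse.injective fun p => (h p).2.1,
    Function.LeftInverse.injective fun p => (h p).2.2.1,
    Function.LeftInverse.injective fun p => (h p).2.2.2⟩

lemma key_19 : Injective (tauF 7 0 1) ∧ Injective (fun p => tauF 7 0 1 p + p) ∧
    Injective (fun p => tauF 7 0 1 p - Fm 7 0 1 1 p) ∧ Injective (fun p => tauF 7 0 1 p - Fm 7 0 1 1 p + p) := by
  have h : ∀ p : AA, invF 76 (tauF 7 0 1 p) = p ∧ invF 77 (tauF 7 0 1 p + p) = p ∧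
      invF 78 (tauF 7 0 1 p - Fm 7 0 1 1 p) = p ∧ invF 79 (tauF 7 0 1 p - Fm 7 0 1 1 p + p) = p := by decide
  exact ⟨Function.LeftInverse.injective fun p => (h p).1,
    Function.LeftInverse.injective fun p => (h p).2.1,
    Function.LeftInverse.injective fun p => (h p).2.2.1,
    Function.LeftInverse.injective fun p => (h p).2.2.2⟩

lemma key_20 : Injective (tauF 7 0 2) ∧ Injective (fun p => tauF 7 0 2 p + p) ∧
    Injective (fun p => tauF 7 0 2 p - Fm 7 0 2 1 p) ∧ Injective (fun p => tauF 7 0 2 p - Fm 7 0 2 1 p + p) := by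
  have h : ∀ p : AA, invF 80 (tauF 7 0 2 p) = p ∧ invF 81 (tauF 7 0 2 p + p) = p ∧
      invF 82 (tauF 7 0 2 p - Fm 7 0 2 1 p) = p ∧ invF 83 (tauF 7 0 2 p - Fm 7 0 2 1 p + p) = p := by decide
  exact ⟨Function.LeftInverse.injective fun p => (h p).1,
    Function.LeftInverse.injective fun p => (h p).2.1,
    Function.LeftInverse.injective fun p => (h p).2.2.1,
    Function.LeftInverse.injective fun p => (h p).2.2.2⟩

lemma key_21 : Injective (tauF 7 3 0) ∧ Injective (fun p => tauF 7 3 0 p + p) ∧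
    Injective (fun p => tauF 7 3 0 p - Fm 7 3 0 1 p) ∧ Injective (fun p => tauF 7 3 0 p - Fm 7 3 0 1 p + p) := by
  have h : ∀ p : AA, invF 84 (tauF 7 3 0 p) = p ∧ invF 85 (tauF 7 3 0 p + p) = p ∧
      invF 86 (tauF 7 3 0 p - Fm 7 3 0 1 p) = p ∧ invF 87 (tauF 7 3 0 p - Fm 7 3 0 1 p + p) = p := by decide
  exact ⟨Function.LeftInverse.injective fun p => (h p).1,
    Function.LeftInverse.injective fun p => (h p).2.1,
    Function.LeftInverse.injective fun p => (h p).2.2.1,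
    Function.LeftInverse.injective fun p => (h p).2.2.2⟩

lemma key_22 : Injective (tauF 7 3 1) ∧ Injective (fun p => tauF 7 3 1 p + p) ∧
    Injective (fun p => tauF 7 3 1 p - Fm 7 3 1 1 p) ∧ Injective (fun p => tauF 7 3 1 p - Fm 7 3 1 1 p + p) := by
  have h : ∀ p : AA, invF 88 (tauF 7 3 1 p) = p ∧ invF 89 (tauF 7 3 1 p + p) = p ∧
      invF 90 (tauF 7 3 1 p - Fm 7 3 1 1 p) = p ∧ invF 91 (tauF 7 3 1 p - Fm 7 3 1 1 p + p) = p := by decide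
  exact ⟨Function.LeftInverse.injective fun p => (h p).1,
    Function.LeftInverse.injective fun p => (h p).2.1,
    Function.LeftInverse.injective fun p => (h p).2.2.1,
    Function.LeftInverse.injective fun p => (h p).2.2.2⟩

lemma key_23 : Injective (tauF 7 3 2) ∧ Injective (fun p => tauF 7 3 2 p + p) ∧
    Injective (fun p => tauF 7 3 2 p - Fm 7 3 2 1 p) ∧ Injective (fun p => tauF 7 3 2 p - Fm 7 3 2 1 p + p) := by
  have h : ∀ p : AA, invF 92 (tauF 7 3 2 p) = p ∧ invF 93 (tauF 7 3 2 p + p) = p ∧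
      invF 94 (tauF 7 3 2 p - Fm 7 3 2 1 p) = p ∧ invF 95 (tauF 7 3 2 p - Fm 7 3 2 1 p + p) = p := by decide
  exact ⟨Function.LeftInverse.injective fun p => (h p).1,
    Function.LeftInverse.injective fun p => (h p).2.1,
    Function.LeftInverse.injective fun p => (h p).2.2.1,
    Function.LeftInverse.injective fun p => (h p).2.2.2⟩

lemma key_24 : Injective (tauF 7 6 0) ∧ Injective (fun p => tauF 7 6 0 p + p) ∧
    Injective (fun p => tauF 7 6 0 p - Fm 7 6 0 1 p) ∧ Injective (fun p => tauF 7 6 0 p - Fm 7 6 0 1 p + p) := by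
  have h : ∀ p : AA, invF 96 (tauF 7 6 0 p) = p ∧ invF 97 (tauF 7 6 0 p + p) = p ∧
      invF 98 (tauF 7 6 0 p - Fm 7 6 0 1 p) = p ∧ invF 99 (tauF 7 6 0 p - Fm 7 6 0 1 p + p) = p := by decide
  exact ⟨Function.LeftInverse.injective fun p => (h p).1,
    Function.LeftInverse.injective fun p => (h p).2.1,
    Function.LeftInverse.injective fun p => (h p).2.2.1,
    Function.LeftInverse.injective fun p => (h p).2.2.2⟩

lemma key_25 : Injective (tauF 7 6 1) ∧ Injective (fun p => tauF 7 6 1 p + p) ∧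
    Injective (fun p => tauF 7 6 1 p - Fm 7 6 1 1 p) ∧ Injective (fun p => tauF 7 6 1 p - Fm 7 6 1 1 p + p) := by
  have h : ∀ p : AA, invF 100 (tauF 7 6 1 p) = p ∧ invF 101 (tauF 7 6 1 p + p) = p ∧
      invF 102 (tauF 7 6 1 p - Fm 7 6 1 1 p) = p ∧ invF 103 (tauF 7 6 1 p - Fm 7 6 1 1 p + p) = p := by decide
  exact ⟨Function.LeftInverse.injective fun p => (h p).1,
    Function.LeftInverse.injective fun p => (h p).2.1,
    Function.LeftInverse.injective fun p => (h p).2.2.1,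
    Function.LeftInverse.injective fun p => (h p).2.2.2⟩

lemma key_26 : Injective (tauF 7 6 2) ∧ Injective (fun p => tauF 7 6 2 p + p) ∧
    Injective (fun p => tauF 7 6 2 p - Fm 7 6 2 1 p) ∧ Injective (fun p => tauF 7 6 2 p - Fm 7 6 2 1 p + p) := by
  have h : ∀ p : AA, invF 104 (tauF 7 6 2 p) = p ∧ invF 105 (tauF 7 6 2 p + p) = p ∧
      invF 106 (tauF 7 6 2 p - Fm 7 6 2 1 p) = p ∧ invF 107 (tauF 7 6 2 p - Fm 7 6 2 1 p + p) = p := by decide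
  exact ⟨Function.LeftInverse.injective fun p => (h p).1,
    Function.LeftInverse.injective fun p => (h p).2.1,
    Function.LeftInverse.injective fun p => (h p).2.2.1,
    Function.LeftInverse.injective fun p => (h p).2.2.2⟩

lemma key (a eb : ZMod 9) (c : ZMod 3) (ha : 3 * a = 3) (he : 3 * eb = 0) :
    Injective (tauF a eb c) ∧ Injective (fun p => tauF a eb c p + p) ∧
    Injective (fun p => tauF a eb c p - Fm a eb c 1 p) ∧
    Injective (fun p => tauF a eb c p - Fm a eb c 1 p + p) := by
  have ha' : a = 1 ∨ a = 4 ∨ a = 7 := by revert ha; revert a; decide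
  have he' : eb = 0 ∨ eb = 3 ∨ eb = 6 := by revert he; revert eb; decide
  have hc' : c = 0 ∨ c = 1 ∨ c = 2 := by revert c; decide
  rcases ha' with rfl | rfl | rfl <;> rcases he' with rfl | rfl | rfl <;>
    rcases hc' with rfl | rfl | rfl
  · exact key_0
  · exact key_1
  · exact key_2
  · exact key_3
  · exact key_4
  · exact key_5
  · exact key_6
  · exact key_7
  · exact key_8
  · exact key_9
  · exact key_10
  · exact key_11
  · exact key_12
  · exact key_13
  · exact key_14
  · exact key_15
  · exact key_16
  · exact key_17
  · exact key_18
  · exact key_19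
  · exact key_20
  · exact key_21
  · exact key_22
  · exact key_23
  · exact key_24
  · exact key_25
  · exact key_26
lemma hval0 : ∀ u : ZMod 9, 3 * u = 0 → ((u.val : ZMod 3)) = 0 := by decide

lemma hval30 : ∀ u : ZMod 9, (((3 * u).val : ZMod 3)) = 0 := by decide

lemma cube3 : ∀ x : ZMod 3, x ^ 3 = x := by decide

lemma cube9 : ∀ x : ZMod 9, 3 * x ^ 3 = 3 * x := by decide

lemma decomp : ∀ p : AA,
    p = (p.1.val • (((1 : ZMod 9), (0 : ZMod 3)) : AA)) +
      (p.2.val • (((0 : ZMod 9), (1 : ZMod 3)) : AA)) := by decide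

lemma master {G : Type*} [Group G] (H : Subgroup G) [hN : H.Normal]
    (e : H ≃* Multiplicative AA) (w : G) (N : ℕ) (hw : w ^ 3 ^ N = 1) :
    ∃ t : H → H, Injective t
      ∧ Injective (fun h : H => ((t h : G) * (h : G)))
      ∧ Injective (fun h : H => w⁻¹ * (h : G)⁻¹ * w * (t h : G))
      ∧ Injective (fun h : H => w⁻¹ * (h : G)⁻¹ * w * (t h : G) * (h : G)) := by
  classical
  have memconj : ∀ h : H, w⁻¹ * (h : G) * w ∈ H := fun h => hN.conj_mem' _ h.2 w
  obtain ⟨ψ, hψval⟩ : ∃ ψ : H → H, ∀ h : H, (ψ h : G) = w⁻¹ * (h : G) * w :=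
    ⟨fun h => ⟨_, memconj h⟩, fun h => rfl⟩
  have ψmul : ∀ s u : H, ψ (s * u) = ψ s * ψ u := by
    intro s u
    apply Subtype.ext
    rw [Subgroup.coe_mul, hψval, hψval, hψval, Subgroup.coe_mul]
    group
  set m : H → AA := fun h => Multiplicative.toAdd (e h) with hmdef
  have minj : Injective m := by
    intro h₁ h₂ hh
    exact e.injective (Multiplicative.toAdd.injective hh)
  have msurj : ∀ p : AA, m (e.symm (Multiplicative.ofAdd p)) = p := by
    intro p; simp [hmdef]
  have madd : ∀ s u : H, m (s * u) = m s + m u := by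
    intro s u; simp [hmdef]
  have minv : ∀ s : H, m s⁻¹ = - m s := by
    intro s; simp [hmdef]
  set φ : AA → AA := fun p => m (ψ (e.symm (Multiplicative.ofAdd p))) with hφdef
  have hback : ∀ x : H, e.symm (Multiplicative.ofAdd (m x)) = x := fun x => by
    simp [hmdef]
  have hφm : ∀ h : H, φ (m h) = m (ψ h) := by
    intro h; rw [hφdef]; simp only []; rw [hback]
  have φadd : ∀ p q : AA, φ (p + q) = φ p + φ q := by
    intro p q
    have h1 : e.symm (Multiplicative.ofAdd (p + q))
        = e.symm (Multiplicative.ofAdd p) * e.symm (Multiplicative.ofAdd q) := by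
      rw [← map_mul]; rfl
    simp only [hφdef]
    rw [h1, ψmul, madd]
  have φzero : φ 0 = 0 := by
    have h00 := φadd 0 0
    rw [add_zero] at h00
    exact (left_eq_add.mp h00)
  have φneg : ∀ p : AA, φ (-p) = - φ p := by
    intro p
    have h := φadd p (-p)
    rw [add_neg_cancel, φzero] at h
    exact (neg_eq_of_add_eq_zero_right h.symm).symm
  have φsmul : ∀ (k : ℕ) (p : AA), φ (k • p) = k • φ p := by
    intro k
    induction k with
    | zero => intro p; simp [φzero]
    | succ k ih => intro p; rw [succ_nsmul, succ_nsmul, φadd, ih]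
  set a : ZMod 9 := (φ (1, 0)).1 with hadef
  set c : ZMod 3 := (φ (1, 0)).2 with hcdef
  set eb : ZMod 9 := (φ (0, 1)).1 with hebdef
  set d : ZMod 3 := (φ (0, 1)).2 with hddef
  have hφ10 : φ (1, 0) = (a, c) := rfl
  have hφ01 : φ (0, 1) = (eb, d) := rfl
  have hmat : ∀ p : AA, φ p = Fm a eb c d p := by
    intro p
    have h1 : φ p = p.1.val • φ (1, 0) + p.2.val • φ (0, 1) := by
      conv_lhs => rw [decomp p]
      rw [φadd, φsmul, φsmul]
    rw [h1, hφ10, hφ01]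
    apply Prod.ext
    · show p.1.val • a + p.2.val • eb = a * p.1 + eb * ((p.2.val : ZMod 9))
      simp only [nsmul_eq_mul, ZMod.natCast_val, ZMod.cast_id]
      ring
    · show p.1.val • c + p.2.val • d = c * ((p.1.val : ZMod 3)) + d * p.2
      simp only [nsmul_eq_mul, ZMod.natCast_val, ZMod.cast_id]
      ring
  have h3eb : 3 * eb = 0 := by
    have h3 : (((0 : ZMod 9), (1 : ZMod 3)) : AA) + (0, 1) + (0, 1) = 0 := by decide
    have hsum : φ ((((0 : ZMod 9), (1 : ZMod 3)) : AA) + (0, 1) + (0, 1))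
        = φ (0, 1) + φ (0, 1) + φ (0, 1) := by rw [φadd, φadd]
    rw [h3, φzero, hφ01] at hsum
    have h1 : (0 : ZMod 9) = eb + eb + eb := congrArg Prod.fst hsum
    have : (3 : ZMod 9) * eb = eb + eb + eb := by ring
    rw [this, ← h1]
  have hconjpow : ∀ (k : ℕ) (h : H),
      ((e.symm (Multiplicative.ofAdd (φ^[k] (m h))) : H) : G) = (w ^ k)⁻¹ * (h : G) * w ^ k := by
    intro k
    induction k with
    | zero =>
      intro h
      simp only [Function.iterate_zero, id_eq, pow_zero, hback]
      group
    | succ k ih =>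
      intro h
      rw [Function.iterate_succ_apply']
      have hmid : φ (φ^[k] (m h))
          = m (ψ (e.symm (Multiplicative.ofAdd (φ^[k] (m h))))) := rfl
      rw [hmid, hback, hψval, ih h, pow_succ]
      group
  -- d = 1
  have hit01 : ∀ k : ℕ, ∃ z : ZMod 9, 3 * z = 0 ∧ φ^[k] (((0 : ZMod 9), (1 : ZMod 3)) : AA) = (z, d ^ k) := by
    intro k
    induction k with
    | zero => exact ⟨0, by simp, by simp⟩
    | succ k ih =>
      obtain ⟨z, hz, hzk⟩ := ih
      refine ⟨a * z + eb * (((d ^ k).val : ZMod 9)), ?_, ?_⟩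
      · linear_combination a * hz + (((d ^ k).val : ZMod 9)) * h3eb
      · rw [Function.iterate_succ_apply', hzk, hmat]
        show (a * z + eb * (((d ^ k).val : ZMod 9)), c * ((z.val : ZMod 3)) + d * d ^ k) = _
        rw [hval0 z hz, mul_zero, zero_add, ← pow_succ']
  have hd1 : d = 1 := by
    obtain ⟨z, hz, hzk⟩ := hit01 (3 ^ N)
    have hc := hconjpow (3 ^ N) (e.symm (Multiplicative.ofAdd (((0 : ZMod 9), (1 : ZMod 3)) : AA)))
    rw [hw, msurj, hzk] at hc
    have hc2 : ((e.symm (Multiplicative.ofAdd ((z, d ^ 3 ^ N) : AA)) : H) : G)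
        = ((e.symm (Multiplicative.ofAdd (((0 : ZMod 9), (1 : ZMod 3)) : AA)) : H) : G) := by
      rw [hc]; group
    have hc3 := Multiplicative.ofAdd.injective (e.symm.injective (Subtype.coe_injective hc2))
    have hdd : d ^ 3 ^ N = 1 := congrArg Prod.snd hc3
    have hdpow : ∀ k : ℕ, d ^ 3 ^ k = d := by
      intro k
      induction k with
      | zero => rw [pow_zero, pow_one]
      | succ k ih => rw [pow_succ, pow_mul, ih, cube3]
    rw [hdpow N] at hdd
    exact hdd
  -- 3 * a = 3
  have hit30 : ∀ k : ℕ, φ^[k] (((3 : ZMod 9), (0 : ZMod 3)) : AA) = (3 * a ^ k, (0 : ZMod 3)) := by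
    intro k
    induction k with
    | zero => simp
    | succ k ih =>
      rw [Function.iterate_succ_apply', ih, hmat]
      show (a * (3 * a ^ k) + eb * ((((0 : ZMod 3)).val : ZMod 9)),
        c * (((3 * a ^ k).val : ZMod 3)) + d * 0) = _
      rw [hval30 (a ^ k)]
      simp only [ZMod.val_zero, Nat.cast_zero, mul_zero, add_zero, zero_add, Prod.mk.injEq]
      refine ⟨by ring, by trivial⟩
  have h3a : 3 * a = 3 := by
    have hc := hconjpow (3 ^ N) (e.symm (Multiplicative.ofAdd (((3 : ZMod 9), (0 : ZMod 3)) : AA)))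
    rw [hw, msurj, hit30] at hc
    have hc2 : ((e.symm (Multiplicative.ofAdd ((3 * a ^ 3 ^ N, (0 : ZMod 3)) : AA)) : H) : G)
        = ((e.symm (Multiplicative.ofAdd (((3 : ZMod 9), (0 : ZMod 3)) : AA)) : H) : G) := by
      rw [hc]; group
    have hc3 := Multiplicative.ofAdd.injective (e.symm.injective (Subtype.coe_injective hc2))
    have haa : 3 * a ^ 3 ^ N = 3 := congrArg Prod.fst hc3
    have hapow : ∀ k : ℕ, 3 * a ^ 3 ^ k = 3 * a := by
      intro k
      induction k with
      | zero => rw [pow_zero, pow_one]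
      | succ k ih => rw [pow_succ, pow_mul, cube9, ih]
    rw [hapow N] at haa
    exact haa
  obtain ⟨k1, k2, k3, k4⟩ := key a eb c h3a h3eb
  have hmat1 : ∀ p : AA, φ p = Fm a eb c 1 p := by
    intro p; rw [hmat, hd1]
  refine ⟨fun h => e.symm (Multiplicative.ofAdd (tauF a eb c (m h))), ?_, ?_, ?_, ?_⟩
  · intro h₁ h₂ hh
    exact minj (k1 (Multiplicative.ofAdd.injective (e.symm.injective hh)))
  · intro h₁ h₂ hh
    simp only [] at hh
    have hH : e.symm (Multiplicative.ofAdd (tauF a eb c (m h₁))) * h₁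
        = e.symm (Multiplicative.ofAdd (tauF a eb c (m h₂))) * h₂ := by
      apply Subtype.ext
      rw [Subgroup.coe_mul, Subgroup.coe_mul]
      exact hh
    have := congrArg m hH
    rw [madd, madd, msurj, msurj] at this
    exact minj (k2 this)
  · intro h₁ h₂ hh
    simp only [] at hh
    have hH : ψ h₁⁻¹ * e.symm (Multiplicative.ofAdd (tauF a eb c (m h₁)))
        = ψ h₂⁻¹ * e.symm (Multiplicative.ofAdd (tauF a eb c (m h₂))) := by
      apply Subtype.ext
      rw [Subgroup.coe_mul, Subgroup.coe_mul, hψval, hψval]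
      rw [Subgroup.coe_inv, Subgroup.coe_inv]
      exact hh
    have hq := congrArg m hH
    rw [madd, madd, msurj, msurj, ← hφm, ← hφm, minv, minv, φneg, φneg,
      hmat1, hmat1, neg_add_eq_sub, neg_add_eq_sub] at hq
    exact minj (k3 hq)
  · intro h₁ h₂ hh
    simp only [] at hh
    have hH : ψ h₁⁻¹ * e.symm (Multiplicative.ofAdd (tauF a eb c (m h₁))) * h₁
        = ψ h₂⁻¹ * e.symm (Multiplicative.ofAdd (tauF a eb c (m h₂))) * h₂ := by
      apply Subtype.ext
      rw [Subgroup.coe_mul, Subgroup.coe_mul, Subgroup.coe_mul, Subgroup.coe_mul,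
        hψval, hψval, Subgroup.coe_inv, Subgroup.coe_inv]
      exact hh
    have hq := congrArg m hH
    rw [madd, madd, madd, madd, msurj, msurj, ← hφm, ← hφm, minv, minv, φneg, φneg,
      hmat1, hmat1, neg_add_eq_sub, neg_add_eq_sub] at hq
    exact minj (k4 hq)
lemma glem2 {G : Type*} [Group G] (v u T h : G) :
    v * (u * T * u⁻¹) * (u * h) = v * u * (T * h) := by group

lemma glem3 {G : Type*} [Group G] (u v T h : G) :
    (u⁻¹ * v * u)⁻¹ * ((u * h)⁻¹ * (v * (u * T * u⁻¹))) * u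
      = (u⁻¹ * v * u)⁻¹ * h⁻¹ * (u⁻¹ * v * u) * T := by group

lemma glem4 {G : Type*} [Group G] (u v T h : G) :
    (u⁻¹ * v * u)⁻¹ * ((u * h)⁻¹ * (v * (u * T * u⁻¹)) * (u * h))
      = (u⁻¹ * v * u)⁻¹ * h⁻¹ * (u⁻¹ * v * u) * T * h := by group

theorem lift_C9xC3
    {G : Type*} [Group G] [Fintype G]
    (hG : ∃ n : ℕ, Fintype.card G = 3 ^ n)
    (H : Subgroup G) [H.Normal]
    (habelian : ∀ x y : G, x ∈ H → y ∈ H → x * y = y * x)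
    (hiso : Nonempty (H ≃* Multiplicative (ZMod 9 × ZMod 3)))
    (hquot : ∃ Φ : G ⧸ H → G ⧸ H, IsColouringBijection Φ) :
    ∃ σ : G → G, IsColouringBijection σ := by
  classical
  obtain ⟨n, hcard⟩ := hG
  obtain ⟨e⟩ := hiso
  obtain ⟨Φ, hb1, hb2, hb3, hb4⟩ := hquot
  have hM : ∀ q : G ⧸ H, ∃ t : H → H, Injective t
      ∧ Injective (fun h : H => ((t h : G) * (h : G)))
      ∧ Injective (fun h : H =>
          ((Quotient.out q)⁻¹ * Quotient.out (Φ q) * Quotient.out q)⁻¹ * (h : G)⁻¹ *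
            ((Quotient.out q)⁻¹ * Quotient.out (Φ q) * Quotient.out q) * (t h : G))
      ∧ Injective (fun h : H =>
          ((Quotient.out q)⁻¹ * Quotient.out (Φ q) * Quotient.out q)⁻¹ * (h : G)⁻¹ *
            ((Quotient.out q)⁻¹ * Quotient.out (Φ q) * Quotient.out q) * (t h : G) * (h : G)) :=
    fun q => master H e _ n (by rw [← hcard]; exact pow_card_eq_one)
  choose t ht1 ht2 ht3 ht4 using hM
  set π : G →* G ⧸ H := QuotientGroup.mk' H with hπdef
  have hπout : ∀ q : G ⧸ H, π (Quotient.out q) = q := fun q => QuotientGroup.out_eq' q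
  have hπmem : ∀ h : H, π (h : G) = 1 := fun h => (QuotientGroup.eq_one_iff _).mpr h.2
  have hmem : ∀ g : G, (Quotient.out (π g))⁻¹ * g ∈ H := fun g =>
    QuotientGroup.eq.mp (QuotientGroup.out_eq' (π g))
  obtain ⟨X, hXval⟩ : ∃ X : G → H, ∀ g : G, (X g : G) = (Quotient.out (π g))⁻¹ * g :=
    ⟨fun g => ⟨_, hmem g⟩, fun g => rfl⟩
  obtain ⟨σ, hσg⟩ : ∃ σ : G → G, ∀ g : G, σ g
      = Quotient.out (Φ (π g)) *
        (Quotient.out (π g) * (t (π g) (X g) : G) * (Quotient.out (π g))⁻¹) :=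
    ⟨fun g => _, fun g => rfl⟩
  obtain ⟨Ψ, hΨval⟩ : ∃ Ψ : (G ⧸ H) × H → G, ∀ (q : G ⧸ H) (h : H),
      Ψ (q, h) = Quotient.out q * (h : G) := ⟨fun p => Quotient.out p.1 * (p.2 : G), fun q h => rfl⟩
  have hπΨ : ∀ (q : G ⧸ H) (h : H), π (Ψ (q, h)) = q := by
    intro q h
    rw [hΨval, map_mul, hπout, hπmem, mul_one]
  have hXΨ : ∀ (q : G ⧸ H) (h : H), X (Ψ (q, h)) = h := by
    intro q h
    apply Subtype.ext
    rw [hXval, hπΨ, hΨval, inv_mul_cancel_left]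
  have hσΨ : ∀ (q : G ⧸ H) (h : H), σ (Ψ (q, h))
      = Quotient.out (Φ q) * (Quotient.out q * (t q h : G) * (Quotient.out q)⁻¹) := by
    intro q h
    rw [hσg, hπΨ, hXΨ]
  have hΨg : ∀ g : G, Ψ (π g, X g) = g := by
    intro g
    rw [hΨval, hXval, mul_inv_cancel_left]
  have transfer : ∀ f : G → G, Injective (fun p : (G ⧸ H) × H => f (Ψ p)) → Injective f := by
    intro f hf g₁ g₂ hg
    have h1 : f (Ψ (π g₁, X g₁)) = f (Ψ (π g₂, X g₂)) := by
      rw [hΨg, hΨg]; exact hg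
    have h2 := hf h1
    rw [← hΨg g₁, ← hΨg g₂, h2]
  -- quotient level values
  have eπ1 : ∀ (q : G ⧸ H) (h : H),
      π (Quotient.out (Φ q) * (Quotient.out q * (t q h : G) * (Quotient.out q)⁻¹)) = Φ q := by
    intro q h
    simp only [map_mul, map_inv, hπout, hπmem]
    group
  have eπ2 : ∀ (q : G ⧸ H) (h : H),
      π (Quotient.out (Φ q) * (Quotient.out q * (t q h : G) * (Quotient.out q)⁻¹) *
        (Quotient.out q * (h : G))) = Φ q * q := by
    intro q h
    simp only [map_mul, map_inv, hπout, hπmem]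
    group
  have eπ3 : ∀ (q : G ⧸ H) (h : H),
      π ((Quotient.out q * (h : G))⁻¹ *
        (Quotient.out (Φ q) * (Quotient.out q * (t q h : G) * (Quotient.out q)⁻¹))) = q⁻¹ * Φ q := by
    intro q h
    simp only [map_mul, map_inv, hπout, hπmem]
    group
  have eπ4 : ∀ (q : G ⧸ H) (h : H),
      π ((Quotient.out q * (h : G))⁻¹ *
        (Quotient.out (Φ q) * (Quotient.out q * (t q h : G) * (Quotient.out q)⁻¹)) *
        (Quotient.out q * (h : G))) = q⁻¹ * Φ q * q := by
    intro q h
    simp only [map_mul, map_inv, hπout, hπmem]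
    group
  have inj1 : Injective σ := by
    apply transfer
    rintro ⟨q₁, h₁⟩ ⟨q₂, h₂⟩ hEq
    simp only [hσΨ] at hEq
    have hq : q₁ = q₂ := by
      have h := congrArg π hEq
      rw [eπ1, eπ1] at h
      exact hb1.injective h
    subst hq
    have hT := mul_left_cancel (mul_right_cancel (mul_left_cancel hEq))
    have hh : h₁ = h₂ := ht1 q₁ (Subtype.ext hT)
    rw [hh]
  have inj2 : Injective (fun x => σ x * x) := by
    apply transfer
    rintro ⟨q₁, h₁⟩ ⟨q₂, h₂⟩ hEq
    simp only [hσΨ] at hEq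
    simp only [hΨval] at hEq
    have hq : q₁ = q₂ := by
      have h := congrArg π hEq
      rw [eπ2, eπ2] at h
      exact hb2.injective h
    subst hq
    rw [glem2, glem2] at hEq
    have hT := mul_left_cancel hEq
    have hh : h₁ = h₂ := ht2 q₁ hT
    rw [hh]
  have inj3 : Injective (fun x => x⁻¹ * σ x) := by
    apply transfer
    rintro ⟨q₁, h₁⟩ ⟨q₂, h₂⟩ hEq
    simp only [hσΨ] at hEq
    simp only [hΨval] at hEq
    have hq : q₁ = q₂ := by
      have h := congrArg π hEq
      rw [eπ3, eπ3] at h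
      exact hb3.injective h
    subst hq
    have hE2 : ((Quotient.out q₁)⁻¹ * Quotient.out (Φ q₁) * Quotient.out q₁)⁻¹ *
        ((Quotient.out q₁ * (h₁ : G))⁻¹ *
          (Quotient.out (Φ q₁) * (Quotient.out q₁ * (t q₁ h₁ : G) * (Quotient.out q₁)⁻¹))) *
        Quotient.out q₁
        = ((Quotient.out q₁)⁻¹ * Quotient.out (Φ q₁) * Quotient.out q₁)⁻¹ *
        ((Quotient.out q₁ * (h₂ : G))⁻¹ *
          (Quotient.out (Φ q₁) * (Quotient.out q₁ * (t q₁ h₂ : G) * (Quotient.out q₁)⁻¹))) *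
        Quotient.out q₁ := by rw [hEq]
    rw [glem3, glem3] at hE2
    have hh : h₁ = h₂ := ht3 q₁ hE2
    rw [hh]
  have inj4 : Injective (fun x => x⁻¹ * σ x * x) := by
    apply transfer
    rintro ⟨q₁, h₁⟩ ⟨q₂, h₂⟩ hEq
    simp only [hσΨ] at hEq
    simp only [hΨval] at hEq
    have hq : q₁ = q₂ := by
      have h := congrArg π hEq
      rw [eπ4, eπ4] at h
      exact hb4.injective h
    subst hq
    have hE2 : ((Quotient.out q₁)⁻¹ * Quotient.out (Φ q₁) * Quotient.out q₁)⁻¹ *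
        ((Quotient.out q₁ * (h₁ : G))⁻¹ *
          (Quotient.out (Φ q₁) * (Quotient.out q₁ * (t q₁ h₁ : G) * (Quotient.out q₁)⁻¹)) *
          (Quotient.out q₁ * (h₁ : G)))
        = ((Quotient.out q₁)⁻¹ * Quotient.out (Φ q₁) * Quotient.out q₁)⁻¹ *
        ((Quotient.out q₁ * (h₂ : G))⁻¹ *
          (Quotient.out (Φ q₁) * (Quotient.out q₁ * (t q₁ h₂ : G) * (Quotient.out q₁)⁻¹)) *
          (Quotient.out q₁ * (h₂ : G))) := by rw [hEq]
    rw [glem4, glem4] at hE2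
    have hh : h₁ = h₂ := ht4 q₁ hE2
    rw [hh]
  exact ⟨σ, Finite.injective_iff_bijective.mp inj1, Finite.injective_iff_bijective.mp inj2,
    Finite.injective_iff_bijective.mp inj3, Finite.injective_iff_bijective.mp inj4⟩
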